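/- Let m ≡ 3 (mod 12) with m ≥ 3, n = 2^m - 1, and v = 2^((m-1)/2) - 1. Then gcd(v, n) = 1, and for every integer a with 1 ≤ a ≤ 2^((m-1)/2), the binary digit sum of (a·v mod n) is congruent to 0, 1, or 5 modulo 6. -/

import Mathlib

private lemma ds_bit (a r : ℕ) (hr : r ≤ 1) :
    (Nat.digits 2 (2 * a + r)).sum = (Nat.digits 2 a).sum + r := by
  rcases Nat.eq_zero_or_pos (2 * a + r) with h0 | hpos
  · have : a = 0 ∧ r = 0 := by omega
    simp [this.1, this.2]
  · rw [Nat.digits_def' (by norm_num) hpos]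
    have h1 : (2 * a + r) % 2 = r := by omega
    have h2 : (2 * a + r) / 2 = a := by omega
    rw [h1, h2]
    simp [Nat.add_comm]

private lemma ds_split (k : ℕ) : ∀ x y : ℕ, x < 2 ^ k →
    (Nat.digits 2 (x + 2 ^ k * y)).sum = (Nat.digits 2 x).sum + (Nat.digits 2 y).sum := by
  induction k with
  | zero => intro x y hx; interval_cases x; simp
  | succ k ih =>
    intro x y hx
    have hx2 : x / 2 < 2 ^ k := by
      have := Nat.pow_succ 2 k ▸ hx; omega
    have hkey : x + 2 ^ (k + 1) * y = 2 * (x / 2 + 2 ^ k * y) + x % 2 := by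
      have := Nat.div_add_mod x 2
      ring_nf
      omega
    rw [hkey, ds_bit _ _ (by omega), ih _ y hx2]
    have : (Nat.digits 2 x).sum = (Nat.digits 2 (x / 2)).sum + x % 2 := by
      have := ds_bit (x / 2) (x % 2) (by omega)
      rw [show 2 * (x / 2) + x % 2 = x by omega] at this
      omega
    omega

private lemma ds_compl (k : ℕ) : ∀ b : ℕ, b < 2 ^ k →
    (Nat.digits 2 b).sum + (Nat.digits 2 (2 ^ k - 1 - b)).sum = k := by
  induction k with
  | zero => intro b hb; interval_cases b; simp
  | succ k ih =>
    intro b hb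
    have hb2 : b / 2 < 2 ^ k := by
      have := Nat.pow_succ 2 k ▸ hb; omega
    have e1 : b = 2 * (b / 2) + b % 2 := by omega
    have e2 : 2 ^ (k + 1) - 1 - b = 2 * (2 ^ k - 1 - b / 2) + (1 - b % 2) := by
      have h1 : 0 < 2 ^ k := Nat.pow_pos (by norm_num)
      have : 2 ^ (k + 1) = 2 * 2 ^ k := by ring
      omega
    have hb' : (Nat.digits 2 b).sum = (Nat.digits 2 (b / 2)).sum + b % 2 := by
      have := ds_bit (b / 2) (b % 2) (by omega)
      rw [show 2 * (b / 2) + b % 2 = b by omega] at this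
      omega
    rw [e2, ds_bit _ _ (by omega), hb']
    have := ih (b / 2) hb2
    omega

theorem m3mod12_defSet (m : ℕ) (hm : 3 ≤ m) (h : m % 12 = 3) :
    Nat.gcd (2 ^ ((m - 1) / 2) - 1) (2 ^ m - 1) = 1 ∧
    ∀ a : ℕ, 1 ≤ a → a ≤ 2 ^ ((m - 1) / 2) →
      (Nat.digits 2 (a * (2 ^ ((m - 1) / 2) - 1) % (2 ^ m - 1))).sum % 6 = 0 ∨
      (Nat.digits 2 (a * (2 ^ ((m - 1) / 2) - 1) % (2 ^ m - 1))).sum % 6 = 1 ∨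
      (Nat.digits 2 (a * (2 ^ ((m - 1) / 2) - 1) % (2 ^ m - 1))).sum % 6 = 5 := by
  set k := (m - 1) / 2 with hk
  have hm2k : m = 2 * k + 1 := by omega
  have hk1 : 1 ≤ k := by omega
  have hkpos : (1:ℕ) ≤ 2 ^ k := Nat.one_le_two_pow
  have h2m : 2 ^ m = 2 * (2 ^ k * 2 ^ k) := by
    rw [hm2k]; ring
  constructor
  · -- gcd part
    have hdvd : 2 ^ k - 1 ∣ 2 ^ m - 2 := by
      have h1 : 2 ^ k - 1 ∣ 2 ^ k * 2 ^ k - 1 := by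
        have := Nat.sub_dvd_pow_sub_pow (2 ^ k) 1 2
        simpa [one_pow, pow_two] using this
      have h2 : 2 ^ m - 2 = 2 * (2 ^ k * 2 ^ k - 1) := by
        have h3 : (1:ℕ) ≤ 2 ^ k * 2 ^ k := Nat.one_le_iff_ne_zero.mpr (by positivity)
        omega
      rw [h2]
      exact Dvd.dvd.mul_left h1 2
    have hd1 : Nat.gcd (2 ^ k - 1) (2 ^ m - 1) ∣ 2 ^ m - 2 :=
      (Nat.gcd_dvd_left _ _).trans hdvd
    have hd2 : Nat.gcd (2 ^ k - 1) (2 ^ m - 1) ∣ 2 ^ m - 1 := Nat.gcd_dvd_right _ _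
    have hd3 : Nat.gcd (2 ^ k - 1) (2 ^ m - 1) ∣ (2 ^ m - 1) - (2 ^ m - 2) :=
      Nat.dvd_sub hd2 hd1
    have h4 : (2 ^ m - 1) - (2 ^ m - 2) = 1 := by
      have : (2:ℕ) ≤ 2 ^ m := by
        calc (2:ℕ) = 2 ^ 1 := rfl
        _ ≤ 2 ^ m := Nat.pow_le_pow_right (by norm_num) (by omega)
      omega
    rw [h4] at hd3
    exact Nat.eq_one_of_dvd_one hd3 ▸ Nat.dvd_one.mp hd3
  · intro a ha1 ha2
    -- the value is less than the modulus
    have hlt : a * (2 ^ k - 1) < 2 ^ m - 1 := by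
      have : a * (2 ^ k - 1) ≤ 2 ^ k * (2 ^ k - 1) :=
        Nat.mul_le_mul_right _ ha2
      have h2 : 2 ^ k * (2 ^ k - 1) = 2 ^ k * 2 ^ k - 2 ^ k := by
        rw [Nat.mul_sub]; ring_nf
      have h3 : 2 ^ k ≤ 2 ^ k * 2 ^ k := Nat.le_mul_of_pos_left _ (by omega)
      omega
    rw [Nat.mod_eq_of_lt hlt]
    -- decompose a * (2^k - 1) = (2^k - a) + 2^k * (a - 1)
    have hdecomp : a * (2 ^ k - 1) = (2 ^ k - a) + 2 ^ k * (a - 1) := by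
      have := Nat.mul_sub a (2 ^ k) 1
      have h5 : a ≤ a * 2 ^ k := Nat.le_mul_of_pos_right _ (by omega)
      have h6 : 2 ^ k * (a - 1) = 2 ^ k * a - 2 ^ k := by
        rw [Nat.mul_sub]; ring_nf
      have h7 : 2 ^ k ≤ 2 ^ k * a := Nat.le_mul_of_pos_right _ (by omega)
      rw [h6]
      have : a * 2 ^ k = 2 ^ k * a := Nat.mul_comm _ _
      omega
    rw [hdecomp, ds_split k (2 ^ k - a) (a - 1) (by omega)]
    have hcompl := ds_compl k (a - 1) (by omega)
    have he : 2 ^ k - 1 - (a - 1) = 2 ^ k - a := by omega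
    rw [he] at hcompl
    have hsum : (Nat.digits 2 (2 ^ k - a)).sum + (Nat.digits 2 (a - 1)).sum = k := by
      omega
    rw [hsum]
    have : k % 6 = 1 := by omega
    right; left; exact this
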